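/- arXiv:math/0703780 — 9 statements merged into one kernel-verified Lean document; each statement's English description precedes it below -/
import Mathlib

section
/- Let (R,d) be a differential algebra of weight λ. Then for all x, y ∈ R and n ∈ ℕ, the generalized Leibniz formula holds: d^n(xy) = Σ_{k=0}^{n} Σ_{j=0}^{n-k} (n choose k)(n-k choose j) λ^k d^{n-j}(x) d^{k+j}(y). -/
section GLAux

variable {k R : Type*} [CommRing k] [Ring R] [Algebra k R]

private def GLA (k : Type*) [CommRing k] (R : Type*) [Ring R] [Algebra k R] :
    Module.End k (ℕ → ℕ → R) where
  toFun f := fun a b => f (a + 1) b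
  map_add' _ _ := rfl
  map_smul' _ _ := rfl

private def GLB (k : Type*) [CommRing k] (R : Type*) [Ring R] [Algebra k R] :
    Module.End k (ℕ → ℕ → R) where
  toFun f := fun a b => f a (b + 1)
  map_add' _ _ := rfl
  map_smul' _ _ := rfl

private lemma GLA_pow (p : ℕ) (f : ℕ → ℕ → R) (a b : ℕ) :
    ((GLA k R ^ p) f) a b = f (a + p) b := by
  induction p generalizing f a with
  | zero => simp
  | succ p ih =>
    rw [pow_succ, Module.End.mul_apply, ih]
    rfl

private lemma GLB_pow (p : ℕ) (f : ℕ → ℕ → R) (a b : ℕ) :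
    ((GLB k R ^ p) f) a b = f a (b + p) := by
  induction p generalizing f b with
  | zero => simp
  | succ p ih =>
    rw [pow_succ, Module.End.mul_apply, ih]
    rfl

private lemma GL_comm : Commute (GLA k R) (GLB k R) := by
  ext f a b
  rfl

private def GLE (lam : k) : Module.End k (ℕ → ℕ → R) :=
  GLA k R + GLB k R + lam • (GLA k R * GLB k R)

private lemma GLE_apply (lam : k) (g : ℕ → ℕ → R) (a b : ℕ) :
    (GLE lam g) a b = g (a + 1) b + g a (b + 1) + lam • g (a + 1) (b + 1) := rfl

private lemma GL_iter (lam : k) (d : R →ₗ[k] R) :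
    ∀ (n : ℕ) (g : ℕ → ℕ → R),
      (∀ a b, d (g a b) = g (a + 1) b + g a (b + 1) + lam • g (a + 1) (b + 1)) →
      ∀ a b, (⇑d)^[n] (g a b) = ((GLE lam ^ n) g) a b := by
  intro n
  induction n with
  | zero => intro g hg a b; simp
  | succ n ih =>
    intro g hg a b
    have hEg : ∀ a b, d ((GLE lam g) a b) =
        (GLE lam g) (a + 1) b + (GLE lam g) a (b + 1) + lam • (GLE lam g) (a + 1) (b + 1) := by
      intro a b
      rw [GLE_apply]
      simp only [map_add, map_smul, hg, GLE_apply]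
    rw [Function.iterate_succ_apply, show d (g a b) = (GLE lam g) a b by rw [hg, GLE_apply],
      ih (GLE lam g) hEg a b, pow_succ]
    rfl

end GLAux

/-- Generalized Leibniz formula of weight λ:
`d^n(xy) = Σ_{k=0}^n Σ_{j=0}^{n-k} (n choose k)(n-k choose j) λ^k d^{n-j}(x) d^{k+j}(y)`. -/
theorem general_leibniz_weight_lambda
    (k R : Type*) [CommRing k] [Ring R] [Algebra k R]
    (lam : k) (d : R →ₗ[k] R)
    (hleib : ∀ x y : R, d (x * y) = d x * y + x * d y + lam • (d x * d y))
    (x y : R) (n : ℕ) :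
    (⇑d)^[n] (x * y) =
      ∑ i ∈ Finset.range (n + 1), ∑ j ∈ Finset.range (n - i + 1),
        (n.choose i * (n - i).choose j) •
          (lam ^ i • ((⇑d)^[n - j] x * (⇑d)^[i + j] y)) := by
  set f : ℕ → ℕ → R := fun a b => (⇑d)^[a] x * (⇑d)^[b] y with hf
  have hcompat : ∀ a b, d (f a b) = f (a + 1) b + f a (b + 1) + lam • f (a + 1) (b + 1) := by
    intro a b
    simp only [hf]
    rw [hleib, Function.iterate_succ_apply', Function.iterate_succ_apply']
  have h1 : (⇑d)^[n] (x * y) = ((GLE lam ^ n) f) 0 0 := by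
    have := GL_iter lam d n f hcompat 0 0
    simpa [hf] using this
  rw [h1]
  -- now expand the operator power
  have hAB : Commute (GLA k R) (GLB k R) := GL_comm
  have hc : Commute (lam • (GLA k R * GLB k R)) (GLA k R + GLB k R) := by
    have h1 : Commute (GLA k R * GLB k R) (GLA k R) :=
      (Commute.refl _).mul_left hAB.symm
    have h2 : Commute (GLA k R * GLB k R) (GLB k R) :=
      hAB.mul_left (Commute.refl _)
    exact (h1.add_right h2).smul_left lam
  have hE : GLE (R := R) lam = lam • (GLA k R * GLB k R) + (GLA k R + GLB k R) := by
    rw [GLE]; abel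
  rw [hE, Commute.add_pow hc, LinearMap.sum_apply]
  simp only [Finset.sum_apply]
  refine Finset.sum_congr rfl fun i hi => ?_
  have hi' : i ≤ n := Nat.lt_succ_iff.mp (Finset.mem_range.mp hi)
  rw [show GLA k R + GLB k R = GLB k R + GLA k R from add_comm _ _,
    Commute.add_pow hAB.symm, Finset.mul_sum, Finset.sum_mul, LinearMap.sum_apply]
  simp only [Finset.sum_apply]
  refine Finset.sum_congr rfl fun j hj => ?_
  have hj' : j ≤ n - i := Nat.lt_succ_iff.mp (Finset.mem_range.mp hj)
  rw [smul_pow, hAB.mul_pow]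
  simp only [Module.End.mul_apply, Module.End.natCast_apply, LinearMap.smul_apply,
    map_nsmul, map_smul, Pi.smul_apply, GLA_pow, GLB_pow]
  rw [show 0 + i + (n - i - j) = n - j by omega, show 0 + i + j = i + j by omega, mul_smul]
end

section
/- For a commutative k-algebra A, the λ-Hurwitz product on A^ℕ, defined by (fg)(n) = Σ_{k=0}^{n} Σ_{j=0}^{n-k} (n choose k)(n-k choose j) λ^k f(n-j) g(k+j), is commutative and associative, with multiplicative identity 1 given by 1(0) = 1_A and 1(n) = 0 for n > 0. -/
/-- The λ-Hurwitz product on `A^ℕ`. -/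
def hurwitzMul {k A : Type*} [CommRing k] [CommRing A] [Algebra k A]
    (lam : k) (f g : ℕ → A) : ℕ → A :=
  fun n => ∑ i ∈ Finset.range (n + 1), ∑ j ∈ Finset.range (n - i + 1),
    (n.choose i * (n - i).choose j) • (lam ^ i • (f (n - j) * g (i + j)))

/-- The identity of the λ-Hurwitz product. -/
def hurwitzOne {A : Type*} [One A] [Zero A] : ℕ → A :=
  fun n => if n = 0 then 1 else 0

namespace HurwitzAux

open Finset

lemma pascal3 (n i j : ℕ) :
    (n+1).choose i * (n+1-i).choose j =
      n.choose i * (n-i).choose j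
      + (if j = 0 then 0 else n.choose i * (n-i).choose (j-1))
      + (if i = 0 then 0 else n.choose (i-1) * (n-(i-1)).choose j) := by
  match i, j with
  | 0, 0 => simp
  | 0, j+1 =>
      simp [Nat.choose_succ_succ (n) j]; ring
  | i+1, j =>
      have h1 : (n+1).choose (i+1) = n.choose i + n.choose (i+1) :=
        Nat.choose_succ_succ n i
      have h2 : n + 1 - (i+1) = n - i := by omega
      rw [h1, h2]
      simp only [Nat.add_eq_zero, Nat.succ_ne_zero, and_false, if_false,
        Nat.add_sub_cancel]
      rcases Nat.lt_or_ge n (i+1) with hn | hn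
      · have : n.choose (i+1) = 0 := Nat.choose_eq_zero_of_lt hn
        rw [this]; rcases j with _ | j <;> simp
      · have h3 : n - i = (n - (i+1)) + 1 := by omega
        match j with
        | 0 => simp [h3]; ring
        | j+1 =>
            rw [h3, Nat.choose_succ_succ (n - (i+1)) j]
            simp only [Nat.succ_ne_zero, if_false, Nat.add_sub_cancel]
            ring

variable {k A : Type*} [CommRing k] [CommRing A] [Algebra k A] (lam : k)

lemma hm_rect (f g : ℕ → A) (n N : ℕ) (hN : n + 1 ≤ N) :
    hurwitzMul lam f g n =
      ∑ i ∈ range N, ∑ j ∈ range N,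
        (n.choose i * (n - i).choose j) • (lam ^ i • (f (n - j) * g (i + j))) := by
  unfold hurwitzMul
  have h1 : ∀ i ∈ range (n+1),
      (∑ j ∈ range (n - i + 1),
        (n.choose i * (n - i).choose j) • (lam ^ i • (f (n - j) * g (i + j))))
      = ∑ j ∈ range N,
        (n.choose i * (n - i).choose j) • (lam ^ i • (f (n - j) * g (i + j))) := by
    intro i hi
    simp only [mem_range] at hi
    apply Finset.sum_subset (Finset.range_subset_range.2 (by omega))
    intro j _ hj'
    simp only [mem_range, not_lt] at hj'
    have : (n - i).choose j = 0 := Nat.choose_eq_zero_of_lt (by omega)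
    simp [this]
  rw [Finset.sum_congr rfl h1]
  apply Finset.sum_subset (Finset.range_subset_range.2 hN)
  intro i _ hi'
  simp only [mem_range, not_lt] at hi'
  have : n.choose i = 0 := Nat.choose_eq_zero_of_lt (by omega)
  simp [this]

lemma hm_zero (f g : ℕ → A) : hurwitzMul lam f g 0 = f 0 * g 0 := by
  simp [hurwitzMul]

lemma hm_comm (f g : ℕ → A) : hurwitzMul lam f g = hurwitzMul lam g f := by
  funext n
  unfold hurwitzMul
  refine Finset.sum_congr rfl ?_
  intro i hi
  simp only [mem_range] at hi
  rw [← Finset.sum_range_reflect]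
  refine Finset.sum_congr rfl ?_
  intro j hj
  simp only [mem_range] at hj
  have h1 : n - i + 1 - 1 - j = n - i - j := by omega
  rw [h1]
  have h2 : (n - i).choose (n - i - j) = (n - i).choose j :=
    Nat.choose_symm (by omega)
  have h3 : n - (n - i - j) = i + j := by omega
  have h4 : i + (n - i - j) = n - j := by omega
  rw [h2, h3, h4, mul_comm (f (i + j)) (g (n - j))]

lemma hm_one (f : ℕ → A) : hurwitzMul lam f hurwitzOne = f := by
  funext n
  unfold hurwitzMul
  rw [Finset.sum_eq_single 0]
  · rw [Finset.sum_eq_single 0]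
    · simp [hurwitzOne]
    · intro j _ hj
      simp [hurwitzOne, hj]
    · simp
  · intro i _ hi
    apply Finset.sum_eq_zero
    intro j _
    have : i + j ≠ 0 := by omega
    simp [hurwitzOne, this, hi]
  · simp

lemma T1 (f g : ℕ → A) (n : ℕ) :
    (∑ i ∈ range (n+2), ∑ j ∈ range (n+2),
       (n.choose i * (n-i).choose j) • (lam ^ i • (f (n+1-j) * g (i+j))))
    = hurwitzMul lam (fun m => f (m+1)) g n := by
  rw [hm_rect lam _ g n (n+2) (by omega)]
  refine sum_congr rfl fun i hi => sum_congr rfl fun j hj => ?_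
  simp only [mem_range] at hi hj
  by_cases hjn : j ≤ n
  · have h : n + 1 - j = n - j + 1 := by omega
    rw [h]
  · have hj' : n - i < j := by omega
    rw [Nat.choose_eq_zero_of_lt hj', Nat.mul_zero, zero_smul, zero_smul]

lemma T2 (f g : ℕ → A) (n : ℕ) :
    (∑ i ∈ range (n+2), ∑ j ∈ range (n+2),
       (if j = 0 then 0 else n.choose i * (n-i).choose (j-1))
         • (lam ^ i • (f (n+1-j) * g (i+j))))
    = hurwitzMul lam f (fun m => g (m+1)) n := by
  rw [hm_rect lam f _ n (n+2) (by omega)]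
  refine sum_congr rfl fun i hi => ?_
  rw [Finset.sum_range_succ' _ (n+1)]
  conv_rhs => rw [Finset.sum_range_succ]
  have hz : (n - i).choose (n+1) = 0 := Nat.choose_eq_zero_of_lt (by omega)
  rw [hz]
  simp only [Nat.mul_zero, zero_smul, add_zero, Nat.succ_ne_zero, if_false,
    Nat.add_sub_cancel, reduceIte]
  refine sum_congr rfl fun j hj => ?_
  have h1 : n + 1 - (j+1) = n - j := by omega
  have h2 : i + (j+1) = i + j + 1 := by omega
  rw [h1, h2]

lemma T3 (f g : ℕ → A) (n : ℕ) :
    (∑ i ∈ range (n+2), ∑ j ∈ range (n+2),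
       (if i = 0 then 0 else n.choose (i-1) * (n-(i-1)).choose j)
         • (lam ^ i • (f (n+1-j) * g (i+j))))
    = lam • hurwitzMul lam (fun m => f (m+1)) (fun m => g (m+1)) n := by
  rw [hm_rect lam _ _ n (n+2) (by omega), Finset.smul_sum]
  rw [Finset.sum_range_succ' _ (n+1)]
  conv_rhs => rw [Finset.sum_range_succ]
  have hz : n.choose (n+1) = 0 := Nat.choose_eq_zero_of_lt (by omega)
  simp only [hz, Nat.zero_mul, zero_smul, Finset.sum_const_zero, smul_zero,
    add_zero, Nat.succ_ne_zero, if_false, Nat.add_sub_cancel, reduceIte]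
  refine sum_congr rfl fun i hi => ?_
  rw [Finset.smul_sum]
  refine sum_congr rfl fun j hj => ?_
  simp only [mem_range] at hi hj
  by_cases hjn : j ≤ n
  · have h1 : n + 1 - j = n - j + 1 := by omega
    have h2 : i + 1 + j = i + j + 1 := by omega
    rw [h1, h2, pow_succ', mul_smul lam (lam ^ i),
      smul_comm ((n.choose i * (n - i).choose j) : ℕ) lam]
  · have hj' : n - i < j := by omega
    rw [Nat.choose_eq_zero_of_lt hj', Nat.mul_zero, zero_smul, zero_smul, smul_zero]

lemma hm_deriv (f g : ℕ → A) (n : ℕ) :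
    hurwitzMul lam f g (n+1) =
      hurwitzMul lam (fun m => f (m+1)) g n + hurwitzMul lam f (fun m => g (m+1)) n
      + lam • hurwitzMul lam (fun m => f (m+1)) (fun m => g (m+1)) n := by
  rw [hm_rect lam f g (n+1) (n+2) (by omega)]
  rw [← T1 lam f g n, ← T2 lam f g n, ← T3 lam f g n]
  rw [← Finset.sum_add_distrib, ← Finset.sum_add_distrib]
  refine sum_congr rfl fun i _ => ?_
  rw [← Finset.sum_add_distrib, ← Finset.sum_add_distrib]
  refine sum_congr rfl fun j _ => ?_
  rw [← add_smul, ← add_smul, ← pascal3]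

lemma hm_add_left (x y h : ℕ → A) (n : ℕ) :
    hurwitzMul lam (x + y) h n = hurwitzMul lam x h n + hurwitzMul lam y h n := by
  unfold hurwitzMul
  rw [← Finset.sum_add_distrib]
  refine sum_congr rfl fun i _ => ?_
  rw [← Finset.sum_add_distrib]
  refine sum_congr rfl fun j _ => ?_
  simp [add_mul, smul_add]

lemma hm_add_right (x y h : ℕ → A) (n : ℕ) :
    hurwitzMul lam x (y + h) n = hurwitzMul lam x y n + hurwitzMul lam x h n := by
  unfold hurwitzMul
  rw [← Finset.sum_add_distrib]
  refine sum_congr rfl fun i _ => ?_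
  rw [← Finset.sum_add_distrib]
  refine sum_congr rfl fun j _ => ?_
  simp [mul_add, smul_add]

lemma hm_smul_left (x y : ℕ → A) (n : ℕ) :
    hurwitzMul lam (lam • x) y n = lam • hurwitzMul lam x y n := by
  unfold hurwitzMul
  rw [Finset.smul_sum]
  refine sum_congr rfl fun i _ => ?_
  rw [Finset.smul_sum]
  refine sum_congr rfl fun j _ => ?_
  simp only [Pi.smul_apply, smul_mul_assoc]
  rw [smul_comm (lam ^ i) lam, smul_comm ((n.choose i * (n - i).choose j) : ℕ) lam]

lemma hm_smul_right (x y : ℕ → A) (n : ℕ) :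
    hurwitzMul lam x (lam • y) n = lam • hurwitzMul lam x y n := by
  unfold hurwitzMul
  rw [Finset.smul_sum]
  refine sum_congr rfl fun i _ => ?_
  rw [Finset.smul_sum]
  refine sum_congr rfl fun j _ => ?_
  simp only [Pi.smul_apply, mul_smul_comm]
  rw [smul_comm (lam ^ i) lam, smul_comm ((n.choose i * (n - i).choose j) : ℕ) lam]

lemma hm_deriv_fun (f g : ℕ → A) :
    (fun m => hurwitzMul lam f g (m+1)) =
      hurwitzMul lam (fun m => f (m+1)) g + hurwitzMul lam f (fun m => g (m+1))
      + lam • hurwitzMul lam (fun m => f (m+1)) (fun m => g (m+1)) := by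
  funext n
  simpa using hm_deriv lam f g n

lemma hm_assoc (f g h : ℕ → A) :
    hurwitzMul lam (hurwitzMul lam f g) h = hurwitzMul lam f (hurwitzMul lam g h) := by
  suffices H : ∀ n (f g h : ℕ → A),
      hurwitzMul lam (hurwitzMul lam f g) h n = hurwitzMul lam f (hurwitzMul lam g h) n by
    funext n; exact H n f g h
  intro n
  induction n with
  | zero =>
      intro f g h
      rw [hm_zero, hm_zero, hm_zero, hm_zero, mul_assoc]
  | succ n ih =>
      intro f g h
      rw [hm_deriv, hm_deriv, hm_deriv_fun lam f g, hm_deriv_fun lam g h]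
      simp only [hm_add_left, hm_add_right, hm_smul_left, hm_smul_right, smul_add]
      simp only [ih]
      module
end HurwitzAux

/-- The λ-Hurwitz product is commutative, associative and has `hurwitzOne` as
a two-sided multiplicative identity. -/
theorem hurwitz_product_comm_assoc_unital
    (k A : Type*) [CommRing k] [CommRing A] [Algebra k A] (lam : k) :
    (∀ f g : ℕ → A, hurwitzMul lam f g = hurwitzMul lam g f) ∧
    (∀ f g h : ℕ → A,
      hurwitzMul lam (hurwitzMul lam f g) h = hurwitzMul lam f (hurwitzMul lam g h)) ∧
    (∀ f : ℕ → A, hurwitzMul lam f hurwitzOne = f) ∧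
    (∀ f : ℕ → A, hurwitzMul lam hurwitzOne f = f) := by
  refine ⟨HurwitzAux.hm_comm lam, HurwitzAux.hm_assoc lam, HurwitzAux.hm_one lam, ?_⟩
  intro f
  rw [HurwitzAux.hm_comm lam, HurwitzAux.hm_one lam]
end

section
/- Let DA denote A^ℕ with the λ-Hurwitz product. The shift operator ∂_A defined by (∂_A f)(n) = f(n+1) is a λ-derivation on DA: ∂_A(fg) = ∂_A(f)g + f ∂_A(g) + λ ∂_A(f)∂_A(g), and ∂_A(1) = 0. -/
/-- The shift operator on λ-Hurwitz series. -/
def hurwitzShift {A : Type*} (f : ℕ → A) : ℕ → A := fun n => f (n + 1)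

open Finset

section Aux

set_option linter.unusedSectionVars false

variable {k A : Type*} [CommRing k] [CommRing A] [Algebra k A]

/-- The ordinary binomial (Hurwitz) convolution. -/
def Hconv (f g : ℕ → A) (m : ℕ) : A :=
  ∑ j ∈ range (m+1), (m.choose j) • (f (m-j) * g j)

lemma Hconv_succ (f g : ℕ → A) (m : ℕ) :
    Hconv f g (m+1) = Hconv (hurwitzShift f) g m + Hconv f (hurwitzShift g) m := by
  unfold Hconv hurwitzShift
  rw [Finset.sum_range_succ' (fun j => ((m+1).choose j) • (f (m+1-j) * g j)) (m+1)]
  simp only [Nat.choose_succ_succ, add_smul, Finset.sum_add_distrib, Nat.succ_sub_succ]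
  rw [Finset.sum_range_succ' (fun j => (m.choose j) • (f (m-j+1) * g j)) m]
  rw [Finset.sum_range_succ (fun x => (m.choose (x+1)) • (f (m-x) * g (x+1))) m]
  simp only [Nat.choose_succ_self, zero_smul, add_zero, Nat.choose_zero_right, one_smul,
    Nat.sub_zero]
  have h : ∀ x ∈ range m, (m.choose (x+1)) • (f (m-x) * g (x+1))
      = (m.choose (x+1)) • (f (m-(x+1)+1) * g (x+1)) := by
    intro x hx
    simp only [mem_range] at hx
    have hh : m - (x+1) + 1 = m - x := by omega
    rw [hh]
  rw [Finset.sum_congr rfl h]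
  abel

lemma shift_iter (f : ℕ → A) (i m : ℕ) : (hurwitzShift^[i] f) m = f (m + i) := by
  induction i generalizing m with
  | zero => rfl
  | succ i ih =>
      rw [Function.iterate_succ_apply', hurwitzShift, ih]
      congr 1; omega

lemma hurwitzMul_eq (lam : k) (f g : ℕ → A) (n : ℕ) :
    hurwitzMul lam f g n =
      ∑ i ∈ range (n+1),
        (n.choose i) • lam ^ i • Hconv (hurwitzShift^[i] f) (hurwitzShift^[i] g) (n - i) := by
  unfold hurwitzMul Hconv
  refine Finset.sum_congr rfl fun i hi => ?_
  rw [smul_comm, Finset.smul_sum, Finset.smul_sum]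
  refine Finset.sum_congr rfl fun j hj => ?_
  simp only [mem_range] at hi hj
  rw [shift_iter, shift_iter, mul_smul, smul_comm (lam ^ i)]
  have h1 : n - i - j + i = n - j := by omega
  have h2 : j + i = i + j := by omega
  rw [h1, h2, smul_comm ((n - i).choose j) (lam ^ i)]

lemma key (lam : k) (f g : ℕ → A) (n : ℕ) :
    hurwitzMul lam f g (n+1) =
      hurwitzMul lam (hurwitzShift f) g n + hurwitzMul lam f (hurwitzShift g) n +
        lam • hurwitzMul lam (hurwitzShift f) (hurwitzShift g) n := by
  rw [hurwitzMul_eq, hurwitzMul_eq, hurwitzMul_eq, hurwitzMul_eq]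
  simp only [← Function.iterate_succ_apply hurwitzShift]
  have e1 : (∑ i ∈ range (n+1), (n.choose i) • lam ^ i •
        Hconv (hurwitzShift^[i+1] f) (hurwitzShift^[i] g) (n - i))
      + (∑ i ∈ range (n+1), (n.choose i) • lam ^ i •
        Hconv (hurwitzShift^[i] f) (hurwitzShift^[i+1] g) (n - i))
      = ∑ i ∈ range (n+1), (n.choose i) • lam ^ i •
        Hconv (hurwitzShift^[i] f) (hurwitzShift^[i] g) (n + 1 - i) := by
    rw [← Finset.sum_add_distrib]
    refine Finset.sum_congr rfl fun i hi => ?_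
    simp only [mem_range] at hi
    have h : n + 1 - i = (n - i) + 1 := by omega
    rw [h, Hconv_succ, ← Function.iterate_succ_apply' hurwitzShift i f,
        ← Function.iterate_succ_apply' hurwitzShift i g, smul_add, smul_add]
  have e2 : (∑ i ∈ range (n+1), (n.choose i) • lam ^ i •
        Hconv (hurwitzShift^[i] f) (hurwitzShift^[i] g) (n + 1 - i))
      = (∑ i ∈ range (n+1), (n.choose (i+1)) • lam ^ (i+1) •
          Hconv (hurwitzShift^[i+1] f) (hurwitzShift^[i+1] g) (n - i))
        + Hconv f g (n+1) := by
    rw [Finset.sum_range_succ' (fun i => (n.choose i) • lam ^ i •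
      Hconv (hurwitzShift^[i] f) (hurwitzShift^[i] g) (n + 1 - i)) n]
    congr 1
    · rw [Finset.sum_range_succ (fun i => (n.choose (i+1)) • lam ^ (i+1) •
        Hconv (hurwitzShift^[i+1] f) (hurwitzShift^[i+1] g) (n - i)) n]
      simp only [Nat.choose_succ_self, zero_smul, add_zero, Nat.succ_sub_succ]
    · simp
  have e3 : (lam • ∑ i ∈ range (n+1), (n.choose i) • lam ^ i •
        Hconv (hurwitzShift^[i+1] f) (hurwitzShift^[i+1] g) (n - i))
      = ∑ i ∈ range (n+1), (n.choose i) • lam ^ (i+1) •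
        Hconv (hurwitzShift^[i+1] f) (hurwitzShift^[i+1] g) (n - i) := by
    rw [Finset.smul_sum]
    refine Finset.sum_congr rfl fun i _ => ?_
    rw [smul_comm lam, pow_succ', mul_smul]
  rw [e3, e1, e2]
  rw [Finset.sum_range_succ' (fun i => ((n+1).choose i) • lam ^ i •
    Hconv (hurwitzShift^[i] f) (hurwitzShift^[i] g) (n + 1 - i)) (n+1)]
  simp only [Nat.choose_succ_succ, add_smul, Finset.sum_add_distrib, Nat.succ_sub_succ,
    Nat.choose_zero_right, one_smul, pow_zero, Nat.sub_zero]
  abel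

end Aux

/-- The shift operator is a λ-derivation on the algebra of λ-Hurwitz series:
it satisfies the λ-Leibniz rule and kills the identity. -/
theorem hurwitz_shift_is_lambda_derivation
    (k A : Type*) [CommRing k] [CommRing A] [Algebra k A] (lam : k) :
    (∀ f g : ℕ → A,
      hurwitzShift (hurwitzMul lam f g) =
        hurwitzMul lam (hurwitzShift f) g + hurwitzMul lam f (hurwitzShift g) +
          lam • hurwitzMul lam (hurwitzShift f) (hurwitzShift g)) ∧
    hurwitzShift (hurwitzOne : ℕ → A) = 0 := by
  constructor
  · intro f g
    funext n
    exact key lam f g n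
  · funext n
    simp [hurwitzShift, hurwitzOne]
end

section
/- Let DA be the algebra of λ-Hurwitz series over A, with λ-derivation ∂_A(f)(n) = f(n+1). Define π_A: DA → DA by (π_A f)(n) = f(n-1) for n ≥ 1 and (π_A f)(0) = 0. Then π_A is a Rota-Baxter operator of weight λ on DA and ∂_A ∘ π_A = id, i.e., (DA, ∂_A, π_A) is a differential Rota-Baxter algebra of weight λ. -/
/-- The right-shift operator on λ-Hurwitz series. -/
def hurwitzInt {A : Type*} [Zero A] (f : ℕ → A) : ℕ → A :=
  fun n => match n with
  | 0 => 0
  | m + 1 => f m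


lemma hurwitzInt_zero {A : Type*} [Zero A] (f : ℕ → A) : hurwitzInt f 0 = 0 := rfl
lemma hurwitzInt_succ {A : Type*} [Zero A] (f : ℕ → A) (n : ℕ) :
    hurwitzInt f (n + 1) = f n := rfl

open Finset

lemma hurwitzMul_eq_sq {k A : Type*} [CommRing k] [CommRing A] [Algebra k A]
    (lam : k) (f g : ℕ → A) (n : ℕ) :
    hurwitzMul lam f g n = ∑ i ∈ range (n + 1), ∑ j ∈ range (n + 1),
      (n.choose i * (n - i).choose j) • (lam ^ i • (f (n - j) * g (i + j))) := by
  refine Finset.sum_congr rfl fun i hi => ?_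
  refine Finset.sum_subset ?_ ?_
  · intro j hj; simp only [mem_range] at *; omega
  · intro j hj hj'
    simp only [mem_range] at hj hj'
    rw [Nat.choose_eq_zero_of_lt (show n - i < j by omega), Nat.mul_zero, zero_smul]

lemma key_choose (m i j : ℕ) :
    (m + 1).choose i * (m + 1 - i).choose j =
      (if 1 ≤ j then m.choose i * (m - i).choose (j - 1) else 0) +
      m.choose i * (m - i).choose j +
      (if 1 ≤ i then m.choose (i - 1) * (m + 1 - i).choose j else 0) := by
  rcases i with _ | i
  · rcases j with _ | j
    · simp
    · simp [Nat.choose_succ_succ m j]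
  · rcases j with _ | j
    · have h1 : m + 1 - (i + 1) = m - i := by omega
      simp [h1, Nat.choose_succ_succ m i, Nat.add_comm]
    · by_cases him : i + 1 ≤ m
      · have h1 : m + 1 - (i + 1) = (m - (i + 1)) + 1 := by omega
        have h2 : m - i = (m - (i + 1)) + 1 := by omega
        simp only [h1, h2, Nat.choose_succ_succ m i,
          Nat.choose_succ_succ (m - (i + 1)) j, Nat.add_sub_cancel, if_pos (by omega : 1 ≤ j + 1),
          if_pos (by omega : 1 ≤ i + 1)]
        ring
      · have h0 : m.choose (i + 1) = 0 := Nat.choose_eq_zero_of_lt (by omega)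
        by_cases hm : i = m
        · have h1 : m + 1 - (i + 1) = 0 := by omega
          simp [h0, h1, Nat.choose_eq_zero_of_lt (Nat.succ_pos j)]
        · have h2 : m.choose i = 0 := Nat.choose_eq_zero_of_lt (by omega)
          have h3 : (m + 1).choose (i + 1) = 0 := Nat.choose_eq_zero_of_lt (by omega)
          simp [h0, h2, h3]

/-- `(DA, ∂_A, π_A)` is a differential Rota-Baxter algebra of weight λ:
`π_A` is a Rota-Baxter operator of weight λ and `∂_A ∘ π_A = id`. -/
theorem hurwitz_is_differential_rota_baxter
    (k A : Type*) [CommRing k] [CommRing A] [Algebra k A] (lam : k) :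
    (∀ f g : ℕ → A,
      hurwitzMul lam (hurwitzInt f) (hurwitzInt g) =
        hurwitzInt (hurwitzMul lam (hurwitzInt f) g) +
          hurwitzInt (hurwitzMul lam f (hurwitzInt g)) +
          lam • hurwitzInt (hurwitzMul lam f g)) ∧
    (∀ f : ℕ → A, hurwitzShift (hurwitzInt f) = f) := by
  constructor
  · intro f g
    funext n
    simp only [Pi.add_apply, Pi.smul_apply]
    cases n with
    | zero => simp [hurwitzMul, hurwitzInt]
    | succ m =>
      rw [hurwitzInt_succ, hurwitzInt_succ, hurwitzInt_succ,
        hurwitzMul_eq_sq, hurwitzMul_eq_sq, hurwitzMul_eq_sq, hurwitzMul_eq_sq]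
      have hA : (∑ i ∈ range (m + 1 + 1), ∑ j ∈ range (m + 1 + 1),
            (if 1 ≤ j then m.choose i * (m - i).choose (j - 1) else 0) •
              (lam ^ i • (hurwitzInt f (m + 1 - j) * hurwitzInt g (i + j))))
          = ∑ i ∈ range (m + 1), ∑ j ∈ range (m + 1),
            (m.choose i * (m - i).choose j) •
              (lam ^ i • (hurwitzInt f (m - j) * g (i + j))) := by
        rw [Finset.sum_range_succ]
        have hz : (∑ j ∈ range (m + 1 + 1),
            (if 1 ≤ j then m.choose (m + 1) * (m - (m + 1)).choose (j - 1) else 0) •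
              (lam ^ (m + 1) • (hurwitzInt f (m + 1 - j) * hurwitzInt g (m + 1 + j)))) = 0 := by
          refine Finset.sum_eq_zero fun j _ => ?_
          rw [Nat.choose_eq_zero_of_lt (by omega)]
          simp
        rw [hz, add_zero]
        refine Finset.sum_congr rfl fun i hi => ?_
        rw [Finset.sum_range_succ']
        simp only [Nat.lt_one_iff, if_neg (by omega : ¬ (1 ≤ 0)), zero_smul, add_zero]
        refine Finset.sum_congr rfl fun j hj => ?_
        have h1 : m + 1 - (j + 1) = m - j := by omega
        rw [if_pos (by omega : 1 ≤ j + 1), Nat.add_sub_cancel, h1,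
          show i + (j + 1) = (i + j) + 1 from by omega, hurwitzInt_succ]
      have hB : (∑ i ∈ range (m + 1 + 1), ∑ j ∈ range (m + 1 + 1),
            (m.choose i * (m - i).choose j) •
              (lam ^ i • (hurwitzInt f (m + 1 - j) * hurwitzInt g (i + j))))
          = ∑ i ∈ range (m + 1), ∑ j ∈ range (m + 1),
            (m.choose i * (m - i).choose j) •
              (lam ^ i • (f (m - j) * hurwitzInt g (i + j))) := by
        rw [Finset.sum_range_succ]
        have hz : (∑ j ∈ range (m + 1 + 1),
            (m.choose (m + 1) * (m - (m + 1)).choose j) •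
              (lam ^ (m + 1) • (hurwitzInt f (m + 1 - j) * hurwitzInt g (m + 1 + j)))) = 0 := by
          refine Finset.sum_eq_zero fun j _ => ?_
          rw [Nat.choose_eq_zero_of_lt (by omega), Nat.zero_mul, zero_smul]
        rw [hz, add_zero]
        refine Finset.sum_congr rfl fun i hi => ?_
        simp only [mem_range] at hi
        rw [Finset.sum_range_succ]
        have hz2 : (m - i).choose (m + 1) = 0 := Nat.choose_eq_zero_of_lt (by omega)
        rw [hz2, Nat.mul_zero, zero_smul, add_zero]
        refine Finset.sum_congr rfl fun j hj => ?_
        simp only [mem_range] at hj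
        have h1 : m + 1 - j = (m - j) + 1 := by omega
        rw [h1, hurwitzInt_succ]
      have hC : (∑ i ∈ range (m + 1 + 1), ∑ j ∈ range (m + 1 + 1),
            (if 1 ≤ i then m.choose (i - 1) * (m + 1 - i).choose j else 0) •
              (lam ^ i • (hurwitzInt f (m + 1 - j) * hurwitzInt g (i + j))))
          = lam • (∑ i ∈ range (m + 1), ∑ j ∈ range (m + 1),
            (m.choose i * (m - i).choose j) •
              (lam ^ i • (f (m - j) * g (i + j)))) := by
        rw [Finset.sum_range_succ']
        have hz : (∑ j ∈ range (m + 1 + 1),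
            (if 1 ≤ 0 then m.choose (0 - 1) * (m + 1 - 0).choose j else 0) •
              (lam ^ 0 • (hurwitzInt f (m + 1 - j) * hurwitzInt g (0 + j)))) = 0 := by
          refine Finset.sum_eq_zero fun j _ => ?_
          rw [if_neg (by omega : ¬ (1 ≤ 0)), zero_smul]
        rw [hz, add_zero, Finset.smul_sum]
        refine Finset.sum_congr rfl fun i hi => ?_
        simp only [mem_range] at hi
        rw [Finset.smul_sum, Finset.sum_range_succ]
        have hz2 : (m + 1 - (i + 1)).choose (m + 1) = 0 := Nat.choose_eq_zero_of_lt (by omega)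
        rw [if_pos (by omega : 1 ≤ i + 1), Nat.add_sub_cancel, hz2, Nat.mul_zero, zero_smul,
          add_zero]
        refine Finset.sum_congr rfl fun j hj => ?_
        simp only [mem_range] at hj
        have h1 : m + 1 - j = (m - j) + 1 := by omega
        have h2 : m + 1 - (i + 1) = m - i := by omega
        rw [h1, h2, hurwitzInt_succ, show i + 1 + j = (i + j) + 1 from by omega, hurwitzInt_succ,
          pow_succ', mul_smul, if_pos (by omega : 1 ≤ i + 1),
          smul_comm lam ((m.choose i * (m - i).choose j : ℕ))]
      rw [← hA, ← hB, ← hC, ← Finset.sum_add_distrib, ← Finset.sum_add_distrib]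
      refine Finset.sum_congr rfl fun i _ => ?_
      rw [← Finset.sum_add_distrib, ← Finset.sum_add_distrib]
      refine Finset.sum_congr rfl fun j _ => ?_
      rw [← add_smul, ← add_smul, ← key_choose]
  · intro f
    funext n
    rfl
end

section
/- Let (R,d) be a commutative λ-differential k-algebra. The map η: R → DR defined by η(x)(n) = d^n(x) is a homomorphism of λ-differential algebras: it is a k-algebra homomorphism into the λ-Hurwitz series algebra DR, and ∂_R ∘ η = η ∘ d. -/
lemma hur_coeff (n l i : ℕ) :
    (n+1).choose l * ((n+1)-l).choose i
      = n.choose l * (n-l).choose i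
        + (if i = 0 then 0 else n.choose l * (n-l).choose (i-1))
        + (if l = 0 then 0 else n.choose (l-1) * ((n+1)-l).choose i) := by
  match l, i with
  | 0, 0 => simp
  | 0, (i+1) => simp [Nat.choose_succ_succ]; omega
  | (l+1), 0 => simp [Nat.choose_succ_succ, Nat.succ_sub_succ]; omega
  | (l+1), (i+1) =>
    rw [if_neg (Nat.succ_ne_zero i), if_neg (Nat.succ_ne_zero l),
      show (i+1)-1 = i from rfl, show (l+1)-1 = l from rfl, Nat.succ_sub_succ]
    by_cases h : l < n
    · have hnl : n - l = (n - (l+1)) + 1 := by omega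
      rw [Nat.choose_succ_succ n l, hnl, Nat.choose_succ_succ (n-(l+1)) i]
      ring
    · have h1 : n.choose (l+1) = 0 := Nat.choose_eq_zero_of_lt (by omega)
      have h2 : n - l = 0 := by omega
      have h3 : (n+1).choose (l+1) = n.choose l := by
        rw [Nat.choose_succ_succ, h1, add_zero]
      rw [h1, h2, h3]
      simp

lemma hur_strip {R : Type*} [AddCommMonoid R] (n : ℕ) (g : ℕ → ℕ → R)
    (h1 : ∀ i ∈ Finset.range (n+2), g (n+1) i = 0)
    (h2 : ∀ l ∈ Finset.range (n+1), g l (n+1) = 0) :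
    ∑ l ∈ Finset.range (n+2), ∑ i ∈ Finset.range (n+2), g l i
      = ∑ l ∈ Finset.range (n+1), ∑ i ∈ Finset.range (n+1), g l i := by
  rw [Finset.sum_range_succ, Finset.sum_eq_zero h1, add_zero]
  exact Finset.sum_congr rfl fun l hl => by rw [Finset.sum_range_succ, h2 l hl, add_zero]

lemma hur_key {k R : Type*} [CommRing k] [CommRing R] [Algebra k R]
    (lam : k) (d : R →ₗ[k] R)
    (hleib : ∀ x y : R, d (x * y) = d x * y + x * d y + lam • (d x * d y)) :
    ∀ (n : ℕ) (x y : R), (⇑d)^[n] (x * y) =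
      ∑ l ∈ Finset.range (n+1), ∑ i ∈ Finset.range (n+1),
        (n.choose l * (n-l).choose i) • (lam ^ l • ((⇑d)^[l+i] x * (⇑d)^[n-i] y)) := by
  intro n
  induction n with
  | zero => intro x y; simp
  | succ n ih =>
    intro x y
    rw [Function.iterate_succ_apply', ih x y]
    have expand : d (∑ l ∈ Finset.range (n+1), ∑ i ∈ Finset.range (n+1),
        (n.choose l * (n-l).choose i) • (lam ^ l • ((⇑d)^[l+i] x * (⇑d)^[n-i] y)))
      = (∑ l ∈ Finset.range (n+1), ∑ i ∈ Finset.range (n+1),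
          (n.choose l * (n-l).choose i) • (lam ^ l • ((⇑d)^[(l+i)+1] x * (⇑d)^[n-i] y)))
        + (∑ l ∈ Finset.range (n+1), ∑ i ∈ Finset.range (n+1),
          (n.choose l * (n-l).choose i) • (lam ^ l • ((⇑d)^[l+i] x * (⇑d)^[(n-i)+1] y)))
        + (∑ l ∈ Finset.range (n+1), ∑ i ∈ Finset.range (n+1),
          (n.choose l * (n-l).choose i) • (lam ^ (l+1) • ((⇑d)^[(l+i)+1] x * (⇑d)^[(n-i)+1] y))) := by
      refine Eq.trans (map_sum d _ _) ?_
      rw [← Finset.sum_add_distrib, ← Finset.sum_add_distrib]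
      refine Finset.sum_congr rfl fun l hl => ?_
      rw [map_sum, ← Finset.sum_add_distrib, ← Finset.sum_add_distrib]
      refine Finset.sum_congr rfl fun i hi => ?_
      rw [map_nsmul, map_smul, hleib,
        ← Function.iterate_succ_apply' (⇑d) (l+i) x,
        ← Function.iterate_succ_apply' (⇑d) (n-i) y]
      simp only [smul_add, pow_succ, mul_smul]
    rw [expand]
    -- split the target sum according to hur_coeff
    have split :
        (∑ l ∈ Finset.range (n+2), ∑ i ∈ Finset.range (n+2),
          (n.choose l * (n-l).choose i) •
            (lam ^ l • ((⇑d)^[l+i] x * (⇑d)^[(n+1)-i] y)))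
        + (∑ l ∈ Finset.range (n+2), ∑ i ∈ Finset.range (n+2),
          (if i = 0 then 0 else n.choose l * (n-l).choose (i-1)) •
            (lam ^ l • ((⇑d)^[l+i] x * (⇑d)^[(n+1)-i] y)))
        + (∑ l ∈ Finset.range (n+2), ∑ i ∈ Finset.range (n+2),
          (if l = 0 then 0 else n.choose (l-1) * ((n+1)-l).choose i) •
            (lam ^ l • ((⇑d)^[l+i] x * (⇑d)^[(n+1)-i] y)))
        = ∑ l ∈ Finset.range (n+1+1), ∑ i ∈ Finset.range (n+1+1),
          ((n+1).choose l * ((n+1)-l).choose i) •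
            (lam ^ l • ((⇑d)^[l+i] x * (⇑d)^[(n+1)-i] y)) := by
      rw [← Finset.sum_add_distrib, ← Finset.sum_add_distrib]
      refine Finset.sum_congr rfl fun l hl => ?_
      rw [← Finset.sum_add_distrib, ← Finset.sum_add_distrib]
      refine Finset.sum_congr rfl fun i hi => ?_
      rw [hur_coeff, add_smul, add_smul]
    rw [← split]
    -- T1 = B
    have h1 :
        (∑ l ∈ Finset.range (n+2), ∑ i ∈ Finset.range (n+2),
          (n.choose l * (n-l).choose i) •
            (lam ^ l • ((⇑d)^[l+i] x * (⇑d)^[(n+1)-i] y)))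
        = ∑ l ∈ Finset.range (n+1), ∑ i ∈ Finset.range (n+1),
          (n.choose l * (n-l).choose i) •
            (lam ^ l • ((⇑d)^[l+i] x * (⇑d)^[(n-i)+1] y)) := by
      rw [hur_strip]
      · refine Finset.sum_congr rfl fun l hl => Finset.sum_congr rfl fun i hi => ?_
        rw [show (n+1)-i = (n-i)+1 by
          have := Finset.mem_range.mp hi; omega]
      · intro i hi
        rw [Nat.choose_eq_zero_of_lt (Nat.lt_succ_self n), zero_mul, zero_smul]
      · intro l hl
        rw [Nat.choose_eq_zero_of_lt (show n - l < n + 1 by omega), mul_zero, zero_smul]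
    -- T2 = A
    have h2 :
        (∑ l ∈ Finset.range (n+2), ∑ i ∈ Finset.range (n+2),
          (if i = 0 then 0 else n.choose l * (n-l).choose (i-1)) •
            (lam ^ l • ((⇑d)^[l+i] x * (⇑d)^[(n+1)-i] y)))
        = ∑ l ∈ Finset.range (n+1), ∑ i ∈ Finset.range (n+1),
          (n.choose l * (n-l).choose i) •
            (lam ^ l • ((⇑d)^[(l+i)+1] x * (⇑d)^[n-i] y)) := by
      have inner : ∀ l, (∑ i ∈ Finset.range (n+2),
          (if i = 0 then 0 else n.choose l * (n-l).choose (i-1)) •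
            (lam ^ l • ((⇑d)^[l+i] x * (⇑d)^[(n+1)-i] y)))
          = ∑ i ∈ Finset.range (n+1),
            (n.choose l * (n-l).choose i) •
              (lam ^ l • ((⇑d)^[(l+i)+1] x * (⇑d)^[n-i] y)) := by
        intro l
        rw [Finset.sum_range_succ']
        simp only [Nat.succ_sub_succ, Nat.sub_zero, eq_self_iff_true, if_true,
          Nat.succ_ne_zero, if_false, zero_smul, add_zero]
        refine Finset.sum_congr rfl fun i hi => ?_
        rw [show l+(i+1) = (l+i)+1 from rfl]
      simp only [inner]
      rw [Finset.sum_range_succ]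
      have : (∑ i ∈ Finset.range (n+1),
          (n.choose (n+1) * (n-(n+1)).choose i) •
            (lam ^ (n+1) • ((⇑d)^[(n+1+i)+1] x * (⇑d)^[n-i] y))) = 0 := by
        refine Finset.sum_eq_zero fun i hi => ?_
        rw [Nat.choose_eq_zero_of_lt (Nat.lt_succ_self n), zero_mul, zero_smul]
      rw [this, add_zero]
    -- T3 = C
    have h3 :
        (∑ l ∈ Finset.range (n+2), ∑ i ∈ Finset.range (n+2),
          (if l = 0 then 0 else n.choose (l-1) * ((n+1)-l).choose i) •
            (lam ^ l • ((⇑d)^[l+i] x * (⇑d)^[(n+1)-i] y)))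
        = ∑ l ∈ Finset.range (n+1), ∑ i ∈ Finset.range (n+1),
          (n.choose l * (n-l).choose i) •
            (lam ^ (l+1) • ((⇑d)^[(l+i)+1] x * (⇑d)^[(n-i)+1] y)) := by
      rw [Finset.sum_range_succ']
      simp only [Nat.succ_sub_succ, Nat.sub_zero, eq_self_iff_true, if_true,
        Nat.succ_ne_zero, if_false, zero_smul, Finset.sum_const_zero, add_zero]
      refine Finset.sum_congr rfl fun l hl => ?_
      rw [Finset.sum_range_succ]
      rw [Nat.choose_eq_zero_of_lt (show n - l < n + 1 by omega), mul_zero, zero_smul,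
        add_zero]
      refine Finset.sum_congr rfl fun i hi => ?_
      rw [show (l+1)+i = (l+i)+1 by omega,
        show (n+1)-i = (n-i)+1 by have := Finset.mem_range.mp hi; omega]
    rw [h1, h2, h3]
    abel

/-- For a commutative λ-differential algebra `(R, d)`, the map `η(x)(n) = d^n(x)`
is a morphism of λ-differential algebras from `R` to the λ-Hurwitz series algebra
`DR`: it is a `k`-algebra homomorphism intertwining `d` with the shift. -/
theorem iterated_derivative_map_is_differential_hom
    (k R : Type*) [CommRing k] [CommRing R] [Algebra k R]
    (lam : k) (d : R →ₗ[k] R)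
    (hleib : ∀ x y : R, d (x * y) = d x * y + x * d y + lam • (d x * d y))
    (hone : d 1 = 0)
    (η : R → ℕ → R) (hη : ∀ (x : R) (n : ℕ), η x n = (⇑d)^[n] x) :
    (∀ x y : R, η (x * y) = hurwitzMul lam (η x) (η y)) ∧
    (η 1 = hurwitzOne) ∧
    (∀ x y : R, η (x + y) = η x + η y) ∧
    (∀ (c : k) (x : R), η (c • x) = c • η x) ∧
    (∀ x : R, hurwitzShift (η x) = η (d x)) := by
  have hadd : ∀ (n : ℕ) (a b : R), (⇑d)^[n] (a + b) = (⇑d)^[n] a + (⇑d)^[n] b := by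
    intro n
    induction n with
    | zero => intro a b; simp
    | succ n ih =>
      intro a b
      rw [Function.iterate_succ_apply', Function.iterate_succ_apply',
        Function.iterate_succ_apply', ih, map_add]
  have hsmul : ∀ (n : ℕ) (c : k) (a : R), (⇑d)^[n] (c • a) = c • (⇑d)^[n] a := by
    intro n
    induction n with
    | zero => intro c a; simp
    | succ n ih =>
      intro c a
      rw [Function.iterate_succ_apply', Function.iterate_succ_apply', ih, map_smul]
  refine ⟨?_, ?_, ?_, ?_, ?_⟩
  · -- multiplicativity
    intro x y
    funext n
    rw [hη, hur_key lam d hleib n x y]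
    show _ = ∑ i ∈ Finset.range (n + 1), ∑ j ∈ Finset.range (n - i + 1),
      (n.choose i * (n - i).choose j) • (lam ^ i • (η x (n - j) * η y (i + j)))
    simp only [hη]
    refine Finset.sum_congr rfl fun i hi => ?_
    have hi' : i ≤ n := by have := Finset.mem_range.mp hi; omega
    conv_rhs => rw [← Finset.sum_range_reflect]
    conv_lhs => rw [← Finset.sum_subset (Finset.range_subset_range.mpr (show n - i + 1 ≤ n + 1 by omega))
      (fun j hj hj' => by
        rw [Nat.choose_eq_zero_of_lt
          (show n - i < j by
            have h1 := Finset.mem_range.mp hj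
            have h2 : ¬ j < n - i + 1 := fun h => hj' (Finset.mem_range.mpr h)
            omega), mul_zero, zero_smul])]
    refine Finset.sum_congr rfl fun j hj => ?_
    have hj' : j ≤ n - i := by have := Finset.mem_range.mp hj; omega
    rw [show n - i + 1 - 1 - j = n - i - j by omega,
      Nat.choose_symm hj',
      show n - (n - i - j) = i + j by omega,
      show i + (n - i - j) = n - j by omega]
  · -- unit
    funext n
    rw [hη]
    cases n with
    | zero => simp [hurwitzOne]
    | succ n =>
      rw [Function.iterate_succ_apply, hone, Function.iterate_fixed (map_zero d) n]
      simp [hurwitzOne]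
  · -- additivity
    intro x y
    funext n
    simp [hη, hadd n x y]
  · -- k-linearity
    intro c x
    funext n
    simp [hη, hsmul n c x]
  · -- shift intertwines d
    intro x
    funext n
    simp [hurwitzShift, hη, Function.iterate_succ_apply]
end

section
/- The functor G: Alg_k → Dif_λ sending A to the λ-Hurwitz series algebra (DA, ∂_A) is right adjoint to the forgetful functor V: Dif_λ → Alg_k. Equivalently, for any λ-differential k-algebra (R,d), any k-algebra A, and any k-algebra homomorphism f: R → A, there is a unique λ-differential algebra morphism f̃: (R,d) → (DA, ∂_A) with ε_A ∘ f̃ = f, where ε_A(g) = g(0). -/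
/-- Trinomial-style coefficient: `hc n p q = n! / ((p+q-n)! (n-p)! (n-q)!)`
on its support `p ≤ n`, `q ≤ n`, `n ≤ p + q`, and `0` elsewhere. -/
def hc (n p q : ℕ) : ℕ :=
  if p ≤ n ∧ q ≤ n ∧ n ≤ p + q then n.choose (p + q - n) * (n - (p + q - n)).choose (n - p) else 0

lemma hc_eval (a b c : ℕ) : hc (a + b + c) (a + b) (a + c) = (a + b + c).choose a * (b + c).choose c := by
  unfold hc
  rw [if_pos (by omega)]
  congr 1
  · congr 1; omega
  · congr 1 <;> omega

lemma hc_eval' (n p q a b c : ℕ) (h1 : n = a+b+c) (h2 : p = a+b) (h3 : q = a+c) :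
    hc n p q = n.choose a * (b+c).choose c := by
  subst h2 h3; rw [h1, hc_eval]

lemma hc_zero {n p q : ℕ} (h : ¬ (p ≤ n ∧ q ≤ n ∧ n ≤ p + q)) : hc n p q = 0 := by
  unfold hc; rw [if_neg h]

/-- The Pascal-type recursion for the trinomial coefficients. -/
lemma hc_rec (n p q : ℕ) :
    hc (n+1) p q = (if 1 ≤ p then hc n (p-1) q else 0) + (if 1 ≤ q then hc n p (q-1) else 0)
      + (if 1 ≤ p ∧ 1 ≤ q then hc n (p-1) (q-1) else 0) := by
  by_cases H : p ≤ n+1 ∧ q ≤ n+1 ∧ n+1 ≤ p+q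
  · obtain ⟨a, b, c, hp, hq, hn⟩ : ∃ a b c, p = a+b ∧ q = a+c ∧ n+1 = a+b+c :=
      ⟨p+q-n-1, n+1-q, n+1-p, by omega, by omega, by omega⟩
    subst hp hq
    rcases a with _|a <;> rcases b with _|b <;> rcases c with _|c
    · omega
    · -- a=0,b=0,c=c+1
      rw [if_neg (show ¬(1 ≤ 0+0) by omega), if_pos (show 1 ≤ 0+(c+1) by omega),
          if_neg (show ¬(1 ≤ 0+0 ∧ 1 ≤ 0+(c+1)) by omega),
          hc_eval' (n+1) (0+0) (0+(c+1)) 0 0 (c+1) (by omega) (by omega) (by omega),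
          hc_eval' n (0+0) (0+(c+1)-1) 0 0 c (by omega) (by omega) (by omega)]
      simp
    · -- a=0,b=b+1,c=0
      rw [if_pos (by omega), if_neg (by omega), if_neg (by omega),
          hc_eval' (n+1) (0+(b+1)) (0+0) 0 (b+1) 0 (by omega) (by omega) (by omega),
          hc_eval' n (0+(b+1)-1) (0+0) 0 b 0 (by omega) (by omega) (by omega)]
      simp
    · -- a=0,b+1,c+1
      rw [if_pos (show 1 ≤ 0+(b+1) by omega), if_pos (show 1 ≤ 0+(c+1) by omega),
          if_pos (show 1 ≤ 0+(b+1) ∧ 1 ≤ 0+(c+1) by omega),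
          hc_eval' (n+1) (0+(b+1)) (0+(c+1)) 0 (b+1) (c+1) (by omega) (by omega) (by omega),
          hc_eval' n (0+(b+1)-1) (0+(c+1)) 0 b (c+1) (by omega) (by omega) (by omega),
          hc_eval' n (0+(b+1)) (0+(c+1)-1) 0 (b+1) c (by omega) (by omega) (by omega),
          hc_zero (show ¬((0+(b+1)-1) ≤ n ∧ (0+(c+1)-1) ≤ n ∧ n ≤ (0+(b+1)-1) + (0+(c+1)-1)) by omega),
          show (b+1)+(c+1) = (b+c+1)+1 from by omega,
          show b+(c+1) = b+c+1 from by omega,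
          show (b+1)+c = b+c+1 from by omega,
          Nat.choose_succ_succ' (b+c+1) c]
      simp [Nat.choose_zero_right]
      ring
    · -- a+1,0,0
      rw [if_pos (by omega), if_pos (by omega), if_pos (by omega),
          hc_eval' (n+1) (a+1+0) (a+1+0) (a+1) 0 0 (by omega) (by omega) (by omega),
          hc_zero (n := n) (by omega),
          hc_zero (n := n) (by omega),
          hc_eval' n (a+1+0-1) (a+1+0-1) a 0 0 (by omega) (by omega) (by omega)]
      obtain rfl : n = a := by omega
      simp [Nat.choose_self]
    · -- a+1,0,c+1
      rw [if_pos (by omega), if_pos (by omega), if_pos (by omega),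
          hc_eval' (n+1) (a+1+0) (a+1+(c+1)) (a+1) 0 (c+1) (by omega) (by omega) (by omega),
          hc_zero (n := n) (by omega),
          hc_eval' n (a+1+0) (a+1+(c+1)-1) (a+1) 0 c (by omega) (by omega) (by omega),
          hc_eval' n (a+1+0-1) (a+1+(c+1)-1) a 0 (c+1) (by omega) (by omega) (by omega),
          Nat.choose_succ_succ' n a]
      simp [Nat.choose_self]
      ring
    · -- a+1,b+1,0
      rw [if_pos (by omega), if_pos (by omega), if_pos (by omega),
          hc_eval' (n+1) (a+1+(b+1)) (a+1+0) (a+1) (b+1) 0 (by omega) (by omega) (by omega),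
          hc_eval' n (a+1+(b+1)-1) (a+1+0) (a+1) b 0 (by omega) (by omega) (by omega),
          hc_zero (n := n) (by omega),
          hc_eval' n (a+1+(b+1)-1) (a+1+0-1) a (b+1) 0 (by omega) (by omega) (by omega),
          Nat.choose_succ_succ' n a]
      simp
      ring
    · -- a+1,b+1,c+1
      rw [if_pos (by omega), if_pos (by omega), if_pos (by omega),
          hc_eval' (n+1) (a+1+(b+1)) (a+1+(c+1)) (a+1) (b+1) (c+1) (by omega) (by omega) (by omega),
          hc_eval' n (a+1+(b+1)-1) (a+1+(c+1)) (a+1) b (c+1) (by omega) (by omega) (by omega),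
          hc_eval' n (a+1+(b+1)) (a+1+(c+1)-1) (a+1) (b+1) c (by omega) (by omega) (by omega),
          hc_eval' n (a+1+(b+1)-1) (a+1+(c+1)-1) a (b+1) (c+1) (by omega) (by omega) (by omega),
          show (b+1)+(c+1) = (b+c+1)+1 from by omega,
          show b+(c+1) = b+c+1 from by omega,
          show (b+1)+c = b+c+1 from by omega,
          Nat.choose_succ_succ' (b+c+1) c,
          Nat.choose_succ_succ' n a]
      ring
  · rw [hc_zero H]
    have z1 : (if 1 ≤ p then hc n (p-1) q else 0) = 0 := by
      split_ifs with h
      · exact hc_zero (by omega)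
      · rfl
    have z2 : (if 1 ≤ q then hc n p (q-1) else 0) = 0 := by
      split_ifs with h
      · exact hc_zero (by omega)
      · rfl
    have z3 : (if 1 ≤ p ∧ 1 ≤ q then hc n (p-1) (q-1) else 0) = 0 := by
      split_ifs with h
      · exact hc_zero (by omega)
      · rfl
    rw [z1, z2, z3]

/-- The λ-Hurwitz product, reindexed over pairs of "exponents". -/
lemma hm_eq {k A : Type*} [CommRing k] [CommRing A] [Algebra k A]
    (lam : k) (f g : ℕ → A) (n : ℕ) :
    hurwitzMul lam f g n
      = ∑ p ∈ Finset.range (n+1), ∑ q ∈ Finset.range (n+1),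
          hc n p q • (lam ^ (p + q - n) • (f p * g q)) := by
  rw [hurwitzMul]
  rw [← Finset.sum_product' (s := Finset.range (n+1)) (t := Finset.range (n+1))]
  rw [← Finset.sum_filter_add_sum_filter_not (p := fun x : ℕ × ℕ => n ≤ x.1 + x.2)]
  have h2 : ∑ x ∈ (Finset.range (n+1) ×ˢ Finset.range (n+1)).filter
      (fun x : ℕ × ℕ => ¬ n ≤ x.1 + x.2), hc n x.1 x.2 • (lam ^ (x.1 + x.2 - n) • (f x.1 * g x.2)) = 0 := by
    apply Finset.sum_eq_zero
    intro x hx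
    simp only [Finset.mem_filter, Finset.mem_product, Finset.mem_range] at hx
    rw [hc_zero (by omega), zero_smul]
  rw [h2, add_zero]
  rw [Finset.sum_sigma']
  apply Finset.sum_nbij' (i := fun x : (_ : ℕ) × ℕ => ((n - x.2 : ℕ), (x.1 + x.2 : ℕ)))
    (j := fun y : ℕ × ℕ => ⟨y.1 + y.2 - n, n - y.1⟩)
  · intro x hx
    simp only [Finset.mem_sigma, Finset.mem_range] at hx
    simp only [Finset.mem_filter, Finset.mem_product, Finset.mem_range]
    omega
  · intro y hy
    simp only [Finset.mem_filter, Finset.mem_product, Finset.mem_range] at hy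
    simp only [Finset.mem_sigma, Finset.mem_range]
    omega
  · intro x hx
    simp only [Finset.mem_sigma, Finset.mem_range] at hx
    ext <;> simp <;> omega
  · intro y hy
    simp only [Finset.mem_filter, Finset.mem_product, Finset.mem_range] at hy
    ext <;> simp <;> omega
  · intro x hx
    simp only [Finset.mem_sigma, Finset.mem_range] at hx
    dsimp only
    have hguard : (n - x.2 ≤ n ∧ x.1 + x.2 ≤ n ∧ n ≤ (n - x.2) + (x.1 + x.2)) := by omega
    rw [hc, if_pos hguard]
    have e1 : (n - x.2) + (x.1 + x.2) - n = x.1 := by omega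
    have e3 : n - (n - x.2) = x.2 := by omega
    rw [e1, e3]

/-- The co-Leibniz rule for the λ-Hurwitz product with respect to the shift. -/
lemma hmul_succ {k A : Type*} [CommRing k] [CommRing A] [Algebra k A]
    (lam : k) (f g : ℕ → A) (n : ℕ) :
    hurwitzMul lam f g (n+1)
      = hurwitzMul lam (hurwitzShift f) g n + hurwitzMul lam f (hurwitzShift g) n
        + lam • hurwitzMul lam (hurwitzShift f) (hurwitzShift g) n := by
  rw [hm_eq, hm_eq, hm_eq, hm_eq]
  have step1 : ∀ p q : ℕ, hc (n+1) p q • (lam ^ (p+q-(n+1)) • (f p * g q))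
      = (if 1 ≤ p then hc n (p-1) q else 0) • (lam ^ (p+q-(n+1)) • (f p * g q))
        + (if 1 ≤ q then hc n p (q-1) else 0) • (lam ^ (p+q-(n+1)) • (f p * g q))
        + (if 1 ≤ p ∧ 1 ≤ q then hc n (p-1) (q-1) else 0) • (lam ^ (p+q-(n+1)) • (f p * g q)) := by
    intro p q
    rw [hc_rec, add_smul, add_smul]
  calc ∑ p ∈ Finset.range (n+1+1), ∑ q ∈ Finset.range (n+1+1),
        hc (n+1) p q • (lam ^ (p+q-(n+1)) • (f p * g q))
      = (∑ p ∈ Finset.range (n+2), ∑ q ∈ Finset.range (n+2),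
          (if 1 ≤ p then hc n (p-1) q else 0) • (lam ^ (p+q-(n+1)) • (f p * g q)))
        + (∑ p ∈ Finset.range (n+2), ∑ q ∈ Finset.range (n+2),
          (if 1 ≤ q then hc n p (q-1) else 0) • (lam ^ (p+q-(n+1)) • (f p * g q)))
        + (∑ p ∈ Finset.range (n+2), ∑ q ∈ Finset.range (n+2),
          (if 1 ≤ p ∧ 1 ≤ q then hc n (p-1) (q-1) else 0) • (lam ^ (p+q-(n+1)) • (f p * g q))) := by
        simp only [step1, Finset.sum_add_distrib]
    _ = _ := ?_
  congr 1
  · congr 1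
    -- S1
    · rw [Finset.sum_range_succ' _ (n+1)]
      have h0 : (∑ q ∈ Finset.range (n+2),
          (if 1 ≤ (0:ℕ) then hc n (0-1) q else 0) • (lam ^ (0+q-(n+1)) • (f 0 * g q))) = 0 := by
        simp
      rw [h0, add_zero]
      refine Finset.sum_congr rfl fun p _ => ?_
      rw [Finset.sum_range_succ]
      rw [if_pos (by omega : 1 ≤ p+1), hc_zero (by omega), zero_smul, add_zero]
      refine Finset.sum_congr rfl fun q _ => ?_
      rw [if_pos (by omega : 1 ≤ p+1)]
      have e : p+1+q-(n+1) = p+q-n := by omega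
      have e2 : p+1-1 = p := by omega
      rw [e, e2]
      rfl
    -- S2
    · rw [Finset.sum_range_succ]
      have h0 : (∑ q ∈ Finset.range (n+2),
          (if 1 ≤ q then hc n (n+1) (q-1) else 0) • (lam ^ (n+1+q-(n+1)) • (f (n+1) * g q))) = 0 := by
        apply Finset.sum_eq_zero
        intro q _
        split_ifs with h
        · rw [hc_zero (by omega), zero_smul]
        · rw [zero_smul]
      rw [h0, add_zero]
      refine Finset.sum_congr rfl fun p hp => ?_
      rw [Finset.sum_range_succ' _ (n+1)]
      rw [if_neg (by omega : ¬ (1 ≤ (0:ℕ))), zero_smul, add_zero]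
      refine Finset.sum_congr rfl fun q _ => ?_
      rw [if_pos (by omega : 1 ≤ q+1)]
      have e : p+(q+1)-(n+1) = p+q-n := by omega
      have e2 : q+1-1 = q := by omega
      rw [e, e2]
      rfl
  -- S3
  · rw [Finset.smul_sum, Finset.sum_range_succ' _ (n+1)]
    have h0 : (∑ q ∈ Finset.range (n+2),
        (if 1 ≤ (0:ℕ) ∧ 1 ≤ q then hc n (0-1) (q-1) else 0) • (lam ^ (0+q-(n+1)) • (f 0 * g q))) = 0 := by
      simp
    rw [h0, add_zero]
    refine Finset.sum_congr rfl fun p _ => ?_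
    rw [Finset.smul_sum, Finset.sum_range_succ' _ (n+1)]
    rw [if_neg (by omega : ¬ (1 ≤ p+1 ∧ 1 ≤ (0:ℕ))), zero_smul, add_zero]
    refine Finset.sum_congr rfl fun q _ => ?_
    rw [if_pos ⟨by omega, by omega⟩]
    have e2 : p+1-1 = p := by omega
    have e3 : q+1-1 = q := by omega
    rw [e2, e3]
    by_cases h : n ≤ p + q
    · have e : p+1+(q+1)-(n+1) = (p+q-n)+1 := by omega
      rw [e, pow_succ', mul_smul]
      simp only [hurwitzShift]
      exact smul_comm _ _ _
    · rw [hc_zero (by omega), zero_smul, zero_smul, smul_zero]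

/-- Universal property of the λ-Hurwitz series algebra (cofreeness): for any
commutative λ-differential `k`-algebra `(R,d)`, any commutative `k`-algebra `A`
and any `k`-algebra homomorphism `f : R → A`, there is a unique morphism
`F : R → DA` of λ-differential algebras (an algebra map for the λ-Hurwitz product
intertwining `d` with the shift) such that `ε_A ∘ F = f`, where `ε_A(g) = g 0`. -/
theorem hurwitz_cofree_universal_property
    (k R A : Type*) [CommRing k] [CommRing R] [Algebra k R]
    [CommRing A] [Algebra k A]
    (lam : k) (d : R →ₗ[k] R)
    (hleib : ∀ x y : R, d (x * y) = d x * y + x * d y + lam • (d x * d y))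
    (hone : d 1 = 0)
    (f : R →ₐ[k] A) :
    ∃! F : R → ℕ → A,
      (∀ x y : R, F (x * y) = hurwitzMul lam (F x) (F y)) ∧
      (F 1 = hurwitzOne) ∧
      (∀ x y : R, F (x + y) = F x + F y) ∧
      (∀ (c : k) (x : R), F (c • x) = c • F x) ∧
      (∀ x : R, hurwitzShift (F x) = F (d x)) ∧
      (∀ x : R, F x 0 = f x) := by
  have hpow_succ : ∀ (n : ℕ) (x : R), (d ^ (n+1)) x = (d ^ n) (d x) := by
    intro n x
    rw [pow_succ, Module.End.mul_apply]
  have hsh : ∀ z : R, (fun m => f ((d ^ m) (d z))) = hurwitzShift (fun m => f ((d ^ m) z)) := by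
    intro z
    funext m
    simp only [hurwitzShift]
    rw [hpow_succ]
  have key : ∀ (n : ℕ) (x y : R), f ((d ^ n) (x * y))
      = hurwitzMul lam (fun m => f ((d ^ m) x)) (fun m => f ((d ^ m) y)) n := by
    intro n
    induction n with
    | zero =>
      intro x y
      simp [hurwitzMul, pow_zero, Module.End.one_apply, map_mul]
    | succ n ih =>
      intro x y
      rw [hpow_succ, hleib, map_add, map_add, map_smul, map_add, map_add, map_smul,
        ih (d x) y, ih x (d y), ih (d x) (d y), hsh x, hsh y, hmul_succ]
  refine ⟨fun x n => f ((d ^ n) x), ⟨?_, ?_, ?_, ?_, ?_, ?_⟩, ?_⟩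
  · intro x y
    funext n
    exact key n x y
  · funext n
    cases n with
    | zero => simp [hurwitzOne]
    | succ n =>
      show f ((d ^ (n+1)) 1) = hurwitzOne (n+1)
      rw [hpow_succ, hone, map_zero, map_zero]
      simp [hurwitzOne]
  · intro x y
    funext n
    show f ((d ^ n) (x + y)) = f ((d ^ n) x) + f ((d ^ n) y)
    rw [map_add, map_add]
  · intro c x
    funext n
    show f ((d ^ n) (c • x)) = c • f ((d ^ n) x)
    rw [map_smul, map_smul]
  · intro x
    funext n
    show f ((d ^ (n+1)) x) = f ((d ^ n) (d x))
    rw [hpow_succ]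
  · intro x
    show f ((d ^ 0) x) = f x
    rw [pow_zero, Module.End.one_apply]
  · rintro G ⟨-, -, -, -, hGshift, hGeval⟩
    funext x n
    induction n generalizing x with
    | zero =>
      show G x 0 = f ((d ^ 0) x)
      rw [hGeval, pow_zero, Module.End.one_apply]
    | succ n ih =>
      show G x (n+1) = f ((d ^ (n+1)) x)
      have h1 : G x (n+1) = G (d x) n := congrFun (hGshift x) n
      rw [h1, ih (d x), hpow_succ]
end

section
/- Let (A, d_0) be a commutative differential k-algebra of weight λ and let Ш(A) = ⊕_{k≥0} A^{⊗(k+1)} be the mixable shuffle algebra with Rota-Baxter operator P_A(x_0 ⊗ ... ⊗ x_n) = 1 ⊗ x_0 ⊗ ... ⊗ x_n. Define d_A(x_0 ⊗ x_1 ⊗ ... ⊗ x_n) = d_0(x_0) ⊗ x_1 ⊗ ... ⊗ x_n + x_0x_1 ⊗ x_2 ⊗ ... ⊗ x_n + λ d_0(x_0)x_1 ⊗ x_2 ⊗ ... ⊗ x_n (with d_A(x_0) = d_0(x_0) for n=0). Then d_A ∘ P_A = id on Ш(A). -/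
/-- Pure tensors `x₀ ⊗ x₁ ⊗ ⋯ ⊗ xₙ` in the mixable shuffle (free commutative
Rota-Baxter) algebra, expressed via the embedding `ι : A → Ш(A)` and the
Rota-Baxter operator `P`: `x₀ ⊗ x₁ ⊗ ⋯ ⊗ xₙ = x₀ · P(x₁ ⊗ ⋯ ⊗ xₙ)`. -/
def pureTensor {k A S : Type*} [CommRing k] [CommRing A] [Algebra k A]
    [CommRing S] [Algebra k S] (iota : A →ₐ[k] S) (P : S →ₗ[k] S) :
    A → List A → S
  | a, [] => iota a
  | a, b :: l => iota a * P (pureTensor iota P b l)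

/-- On the mixable shuffle algebra `Ш(A)` over a commutative λ-differential algebra
`(A, d₀)`, the operator `d_A` defined on pure tensors by
`d_A(x₀⊗x₁⊗⋯⊗xₙ) = d₀(x₀)⊗x₁⊗⋯⊗xₙ + x₀x₁⊗x₂⊗⋯⊗xₙ + λ d₀(x₀)x₁⊗x₂⊗⋯⊗xₙ`
satisfies `d_A ∘ P_A = id`, where `P_A(x₀⊗⋯⊗xₙ) = 1⊗x₀⊗⋯⊗xₙ`. -/
theorem mixable_shuffle_d_section_of_P
    (k A S : Type*) [CommRing k] [CommRing A] [Algebra k A]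
    [CommRing S] [Algebra k S]
    (lam : k) (iota : A →ₐ[k] S) (P : S →ₗ[k] S)
    (hRB : ∀ x y : S, P x * P y = P (x * P y) + P (P x * y) + lam • P (x * y))
    (hspan : Submodule.span k
      (Set.range fun p : A × List A => pureTensor iota P p.1 p.2) = ⊤)
    (d0 : A →ₗ[k] A)
    (hd0leib : ∀ x y : A, d0 (x * y) = d0 x * y + x * d0 y + lam • (d0 x * d0 y))
    (hd0one : d0 1 = 0)
    (dA : S →ₗ[k] S)
    (hdA0 : ∀ a : A, dA (pureTensor iota P a []) = pureTensor iota P (d0 a) [])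
    (hdA : ∀ (a b : A) (l : List A),
      dA (pureTensor iota P a (b :: l)) =
        pureTensor iota P (d0 a) (b :: l) + pureTensor iota P (a * b) l +
          lam • pureTensor iota P (d0 a * b) l) :
    ∀ (a : A) (l : List A), dA (P (pureTensor iota P a l)) = pureTensor iota P a l := by
  intro a l
  have hzero : ∀ m : List A, pureTensor iota P (0 : A) m = 0 := by
    intro m
    cases m with
    | nil => simp [pureTensor]
    | cons b t => simp [pureTensor]
  have hP : P (pureTensor iota P a l) = pureTensor iota P (1 : A) (a :: l) := by
    simp [pureTensor]
  rw [hP, hdA, hd0one, hzero, zero_mul, hzero, one_mul]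
  simp
end

section
/- Let (A, d_0) be a commutative differential k-algebra of weight λ. The operator d_A on the mixable shuffle algebra Ш(A), defined by d_A(x_0 ⊗ x_1 ⊗ ... ⊗ x_n) = d_0(x_0) ⊗ x_1 ⊗ ... ⊗ x_n + x_0x_1 ⊗ x_2 ⊗ ... ⊗ x_n + λ d_0(x_0)x_1 ⊗ x_2 ⊗ ... ⊗ x_n, is a differential operator of weight λ with respect to the mixable shuffle product ⋄: d_A(x ⋄ y) = d_A(x) ⋄ y + x ⋄ d_A(y) + λ d_A(x) ⋄ d_A(y). -/
/-- The operator `d_A` on the mixable shuffle algebra `Ш(A)` is a differential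
operator of weight λ with respect to the mixable shuffle product: it satisfies the
λ-Leibniz rule (stated here on products of pure tensors, which span `Ш(A)`). -/
theorem mixable_shuffle_d_is_lambda_derivation
    (k A S : Type*) [CommRing k] [CommRing A] [Algebra k A]
    [CommRing S] [Algebra k S]
    (lam : k) (iota : A →ₐ[k] S) (P : S →ₗ[k] S)
    (hRB : ∀ x y : S, P x * P y = P (x * P y) + P (P x * y) + lam • P (x * y))
    (hspan : Submodule.span k
      (Set.range fun p : A × List A => pureTensor iota P p.1 p.2) = ⊤)
    (d0 : A →ₗ[k] A)
    (hd0leib : ∀ x y : A, d0 (x * y) = d0 x * y + x * d0 y + lam • (d0 x * d0 y))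
    (hd0one : d0 1 = 0)
    (dA : S →ₗ[k] S)
    (hdA0 : ∀ a : A, dA (pureTensor iota P a []) = pureTensor iota P (d0 a) [])
    (hdA : ∀ (a b : A) (l : List A),
      dA (pureTensor iota P a (b :: l)) =
        pureTensor iota P (d0 a) (b :: l) + pureTensor iota P (a * b) l +
          lam • pureTensor iota P (d0 a * b) l) :
    ∀ (a a' : A) (l l' : List A),
      dA (pureTensor iota P a l * pureTensor iota P a' l') =
        dA (pureTensor iota P a l) * pureTensor iota P a' l' +
          pureTensor iota P a l * dA (pureTensor iota P a' l') +
          lam • (dA (pureTensor iota P a l) * dA (pureTensor iota P a' l')) := by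
  have Tnil : ∀ x : A, pureTensor iota P x [] = iota x := fun _ => rfl
  have Tcons : ∀ (x b : A) (l : List A),
      pureTensor iota P x (b :: l) = iota x * P (pureTensor iota P b l) :=
    fun _ _ _ => rfl
  -- factorization of pure tensors with a product head
  have Tfact : ∀ (c b : A) (l : List A),
      pureTensor iota P (c * b) l = iota c * pureTensor iota P b l := by
    intro c b l
    cases l with
    | nil => simp [pureTensor, map_mul]
    | cons e m => simp [pureTensor, map_mul, mul_assoc]
  -- key lemma: behavior of dA on ι c * P z for arbitrary z, by span induction
  have L : ∀ (c : A) (z : S),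
      dA (iota c * P z) =
        iota (d0 c) * P z + iota c * z + lam • (iota (d0 c) * z) := by
    intro c z
    have hz : z ∈ Submodule.span k
        (Set.range fun p : A × List A => pureTensor iota P p.1 p.2) := by
      rw [hspan]; trivial
    induction hz using Submodule.span_induction with
    | mem w hw =>
        obtain ⟨⟨b, l⟩, rfl⟩ := hw
        have h := hdA c b l
        simp only [Tcons, Tfact] at h
        exact h
    | zero => simp
    | add u v hu hv ihu ihv =>
        simp only [map_add, mul_add, smul_add]
        rw [ihu, ihv]
        abel
    | smul t u hu ihu =>
        simp only [map_smul, mul_smul_comm, smul_add]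
        rw [ihu]
        simp only [smul_add, mul_smul_comm, smul_comm lam t]
  have hdA0' : ∀ x : A, dA (iota x) = iota (d0 x) := hdA0
  -- key identity for d0 of a product, pushed through iota
  have key : ∀ x y : A, iota (d0 (x * y)) =
      iota (d0 x) * iota y + iota x * iota (d0 y) +
        algebraMap k S lam * (iota (d0 x) * iota (d0 y)) := by
    intro x y
    rw [hd0leib x y]
    simp [map_mul, map_add, Algebra.smul_def]
  intro a a' l l'
  cases l with
  | nil =>
    cases l' with
    | nil =>
      simp only [Tnil]
      rw [← map_mul, hdA0', hdA0', hdA0', key]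
      rw [Algebra.smul_def]
    | cons b' u' =>
      simp only [Tnil, Tcons]
      set Y := pureTensor iota P b' u' with hY
      rw [show iota a * (iota a' * P Y) = iota (a * a') * P Y by
        rw [map_mul, mul_assoc], L (a * a') Y, hdA0', L a' Y, key]
      simp only [map_mul, Algebra.smul_def]
      ring
  | cons b u =>
    cases l' with
    | nil =>
      simp only [Tnil, Tcons]
      set X := pureTensor iota P b u with hX
      rw [show iota a * P X * iota a' = iota (a * a') * P X by
        rw [map_mul]; ring, L (a * a') X, hdA0', L a X, key]
      simp only [map_mul, Algebra.smul_def]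
      ring
    | cons b' u' =>
      simp only [Tcons]
      set X := pureTensor iota P b u with hX
      set Y := pureTensor iota P b' u' with hY
      have hPW : P X * P Y = P (X * P Y + P X * Y + lam • (X * Y)) := by
        rw [map_add, map_add, map_smul]; exact hRB X Y
      rw [show iota a * P X * (iota a' * P Y) = iota (a * a') * (P X * P Y) by
        rw [map_mul]; ring, hPW, L (a * a'), ← hPW, L a X, L a' Y, key]
      simp only [map_mul, Algebra.smul_def]
      ring
end

section
/- Let X be a set and let k{X} = k[Δ(X)] be the polynomial algebra on the set Δ(X) = {x^{(n)} : x ∈ X, n ∈ ℕ}, equipped with the derivation d_X of weight λ determined by d_X(x^{(n)}) = x^{(n+1)} and the recursive λ-Leibniz rule on monomials. Then (k{X}, d_X) is the free commutative differential algebra of weight λ on X: for any commutative differential algebra (R,d) of weight λ and any map f: X → R, there is a unique λ-differential algebra homomorphism f̄: k{X} → R with f̄(x^{(0)}) = f(x) for all x ∈ X. -/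
/-- The polynomial algebra `k{X} = k[Δ(X)]` on `Δ(X) = X × ℕ`, equipped with the
weight-λ derivation `d_X` determined by `d_X(x^{(n)}) = x^{(n+1)}` and the λ-Leibniz
rule, is the free commutative differential algebra of weight λ on `X`: any map
`f : X → R` into a commutative λ-differential algebra `(R, d)` extends uniquely to a
λ-differential algebra homomorphism. -/
theorem free_commutative_differential_algebra
    (k X R : Type*) [CommRing k] [CommRing R] [Algebra k R]
    (lam : k)
    (dX : MvPolynomial (X × ℕ) k →ₗ[k] MvPolynomial (X × ℕ) k)
    (hdXgen : ∀ (x : X) (n : ℕ),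
      dX (MvPolynomial.X (x, n)) = MvPolynomial.X (x, n + 1))
    (hdXleib : ∀ p q : MvPolynomial (X × ℕ) k,
      dX (p * q) = dX p * q + p * dX q + lam • (dX p * dX q))
    (hdXone : dX 1 = 0)
    (d : R →ₗ[k] R)
    (hdleib : ∀ x y : R, d (x * y) = d x * y + x * d y + lam • (d x * d y))
    (hdone : d 1 = 0)
    (f : X → R) :
    ∃! F : MvPolynomial (X × ℕ) k →ₐ[k] R,
      (∀ p : MvPolynomial (X × ℕ) k, F (dX p) = d (F p)) ∧
      (∀ x : X, F (MvPolynomial.X (x, 0)) = f x) := by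
  set g : X × ℕ → R := fun p => d^[p.2] (f p.1) with hg
  set F : MvPolynomial (X × ℕ) k →ₐ[k] R := MvPolynomial.aeval g with hF
  have hFX : ∀ (x : X) (n : ℕ), F (MvPolynomial.X (x, n)) = d^[n] (f x) := by
    intro x n; simp [hF, hg]
  have hFdXX : ∀ (x : X) (n : ℕ),
      F (dX (MvPolynomial.X (x, n))) = d (F (MvPolynomial.X (x, n))) := by
    intro x n
    rw [hdXgen, hFX, hFX, Function.iterate_succ_apply']
  have hcomm : ∀ p, F (dX p) = d (F p) := by
    intro p
    induction p using MvPolynomial.induction_on with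
    | C a =>
      have h1 : (MvPolynomial.C a : MvPolynomial (X × ℕ) k) = a • 1 := by
        rw [MvPolynomial.smul_eq_C_mul, mul_one]
      simp [h1, map_smul, hdXone, hdone]
    | add p q hp hq =>
      rw [map_add, map_add, map_add, map_add, hp, hq]
    | mul_X p n hp =>
      rw [hdXleib, map_add, map_add, map_mul, map_mul, map_smul, map_mul,
        map_mul, hdleib, hp]
      obtain ⟨x, m⟩ := n
      rw [hFdXX _ _]
  refine ⟨F, ⟨hcomm, fun x => by simpa using hFX x 0⟩, ?_⟩
  rintro G ⟨hGcomm, hGX0⟩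
  apply MvPolynomial.algHom_ext
  rintro ⟨x, n⟩
  rw [hFX]
  induction n with
  | zero => simpa using hGX0 x
  | succ m ih =>
    rw [← hdXgen, hGcomm, ih]
    exact (Function.iterate_succ_apply' _ _ _).symm
end
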